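/- Let 𝔖 be an interval system on X, V, W, Z complete Hausdorff commutative topological groups, L : V × W → Z biadditive and continuous in its second variable, and μ : 𝔖 → W a measure. Suppose 𝖵 ⊆ V and 𝖹 ⊆ Z are additive cones (containing 0 and closed under addition), 𝖹 is topologically closed, and L(v, μ(E)) ∈ 𝖹 for every v ∈ 𝖵 and E ∈ 𝔖. If f : X → V is Lebesgue–McShane integrable and f(x) ∈ 𝖵 for every x ∈ X, then ∫L(f, μ) ∈ 𝖹. -/

import Mathlib

/-- A family `S` of subsets of `X` is an *interval system* if for all `A, B ∈ S` there exist
countable pairwise disjoint families `D₁, D₂ ⊆ S` with `⋃₀ D₁ = A \ B` and `⋃₀ D₂ = A ∩ B`. -/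
def IsIntervalSystem {X : Type*} (S : Set (Set X)) : Prop :=
  ∀ A ∈ S, ∀ B ∈ S,
    (∃ D : Set (Set X), D ⊆ S ∧ D.Countable ∧ D.PairwiseDisjoint id ∧ ⋃₀ D = A \ B) ∧
    (∃ D : Set (Set X), D ⊆ S ∧ D.Countable ∧ D.PairwiseDisjoint id ∧ ⋃₀ D = A ∩ B)

/-- A map `μ` defined on the sets of `X`, with values in a commutative topological group, is
a *measure* on the set system `S` if it is σ-additive on `S`: whenever a member `B` of `S`
is the union of a countable pairwise disjoint family `(A i)` of members of `S`, the net of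
finite partial sums `∑ i ∈ Ξ, μ (A i)` (over finite `Ξ`, directed by inclusion) converges
to `μ B`, i.e. `HasSum (fun i => μ (A i)) (μ B)`. -/
def IsAddMeasure {X W : Type*} [AddCommMonoid W] [TopologicalSpace W]
    (S : Set (Set X)) (μ : Set X → W) : Prop :=
  ∀ (ι : Type) (A : ι → Set X) (B : Set X), Countable ι → B ∈ S →
    (∀ i, A i ∈ S) → (Pairwise fun i j => Disjoint (A i) (A j)) →
    (⋃ i, A i) = B → HasSum (fun i => μ (A i)) (μ B)

/-- The value at `x` of the step function `∑ j, c j • χ_{E j}`. -/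
noncomputable def stepVal {X V : Type*} [AddCommMonoid V] {n : ℕ}
    (c : Fin n → V) (E : Fin n → Set X) (x : X) : V :=
  ∑ j, (E j).indicator (fun _ => c j) x

/-- `A ⊆ V × X` is an *envelope* of sets in `V` with respect to the set system `S` if
(i) it contains the graph of some step function over `S`, and (ii) it has a countable
generating system `D ⊆ S`:  `A = (⋃ d ∈ D, A^d ×ˢ d) ∪ ({0} ×ˢ (X \ ⋃₀ D))`, where
`A^d = {v | ∀ x ∈ d, (v, x) ∈ A}`. -/
def IsEnvelope {X V : Type*} [AddCommMonoid V] (S : Set (Set X)) (A : Set (V × X)) : Prop :=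
  (∃ (n : ℕ) (c : Fin n → V) (E : Fin n → Set X),
      (∀ j, E j ∈ S) ∧ ∀ x, (stepVal c E x, x) ∈ A) ∧
  (∃ D : Set (Set X), D ⊆ S ∧ D.Countable ∧
      A = (⋃ d ∈ D, {v : V | ∀ x ∈ d, (v, x) ∈ A} ×ˢ d) ∪ (({0} : Set V) ×ˢ (⋃₀ D)ᶜ))

/-- The pre-integral `∫^p L(A, μ)` of an envelope: the closure of the set of all values
`∑ j, L (c j) (μ (E j))` over step functions whose graph is contained in `A`. -/
def preIntegral {X V W Z : Type*} [AddCommMonoid V] [AddCommMonoid Z] [TopologicalSpace Z]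
    (S : Set (Set X)) (L : V → W → Z) (μ : Set X → W) (A : Set (V × X)) : Set Z :=
  closure { z : Z | ∃ (n : ℕ) (c : Fin n → V) (E : Fin n → Set X),
    (∀ j, E j ∈ S) ∧ (∀ x, (stepVal c E x, x) ∈ A) ∧ z = ∑ j, L (c j) (μ (E j)) }

/-- `f : X → V` has Lebesgue–McShane integral `a` if for every neighborhood `T` of `0` in `Z`
there is an envelope `A` containing the graph of `f` with `∫^p L(A, μ) ⊆ a + T`. -/
def HasLMIntegral {X V W Z : Type*} [AddCommMonoid V] [AddCommMonoid Z] [TopologicalSpace Z]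
    (S : Set (Set X)) (L : V → W → Z) (μ : Set X → W) (f : X → V) (a : Z) : Prop :=
  ∀ T ∈ nhds (0 : Z), ∃ A : Set (V × X), IsEnvelope S A ∧ (∀ x, (f x, x) ∈ A) ∧
    preIntegral S L μ A ⊆ {z | ∃ t ∈ T, z = a + t}

open Set Function

section Infra
universe u
variable {X : Type u} {S : Set (Set X)}

lemma exists_decomp_of_countable {B : Set X}
    (h : ∃ D : Set (Set X), D ⊆ S ∧ D.Countable ∧ D.PairwiseDisjoint id ∧ ⋃₀ D = B) :
    ∃ (ι : Type) (_ : Countable ι) (P : ι → Set X),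
      (∀ i, P i ∈ S) ∧ Pairwise (Function.onFun Disjoint P) ∧ (⋃ i, P i) = B := by
  classical
  obtain ⟨D, hDS, hDc, hDd, hDu⟩ := h
  rcases eq_empty_or_nonempty D with rfl | hne
  · refine ⟨PEmpty, inferInstance, fun i => i.elim, fun i => i.elim, fun i => i.elim, ?_⟩
    simp [← hDu]
  obtain ⟨g, hg⟩ := hDc.exists_eq_range hne
  -- first-occurrence indices
  refine ⟨{m : ℕ // ∀ m' < m, g m' ≠ g m}, inferInstance, fun i => g i.1, ?_, ?_, ?_⟩
  · intro i
    exact hDS (hg ▸ ⟨i.1, rfl⟩)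
  · intro i j hne'
    have hgij : g i.1 ≠ g j.1 := by
      rcases lt_trichotomy i.1 j.1 with h | h | h
      · exact j.2 i.1 h
      · exact absurd (Subtype.ext h) hne'
      · exact fun he => (i.2 j.1 h) he.symm
    have h1 : g i.1 ∈ D := hg ▸ ⟨i.1, rfl⟩
    have h2 : g j.1 ∈ D := hg ▸ ⟨j.1, rfl⟩
    exact hDd h1 h2 hgij
  · rw [← hDu]
    apply Set.Subset.antisymm
    · exact iUnion_subset fun i => subset_sUnion_of_mem (hg ▸ ⟨i.1, rfl⟩)
    · intro x hx
      obtain ⟨d, hd, hxd⟩ := hx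
      rw [hg] at hd
      obtain ⟨m, rfl⟩ := hd
      have hex : ∃ k, g k = g m := ⟨m, rfl⟩
      refine mem_iUnion.2 ⟨⟨Nat.find hex, ?_⟩, ?_⟩
      · intro m' hm' heq
        exact absurd (heq ▸ Nat.find_spec hex) (Nat.find_min hex hm')
      · rw [Nat.find_spec hex]; exact hxd

structure Fam (S : Set (Set X)) where
  ι : Type
  cnt : Countable ι
  P : ι → Set X
  mem : ∀ i, P i ∈ S
  disj : Pairwise (Function.onFun Disjoint P)

attribute [instance] Fam.cnt

def Fam.unionSet (F : Fam S) : Set X := ⋃ i, F.P i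

lemma Fam.piece_subset (F : Fam S) (i : F.ι) : F.P i ⊆ F.unionSet :=
  Set.subset_iUnion F.P i

noncomputable def Fam.single (B : Set X) (hB : B ∈ S) : Fam S :=
  ⟨PUnit, inferInstance, fun _ => B, fun _ => hB, by
    intro i j h; cases i; cases j; exact absurd rfl h⟩

@[simp] lemma Fam.single_unionSet (B : Set X) (hB : B ∈ S) :
    (Fam.single B hB).unionSet = B := by
  simp only [Fam.single, Fam.unionSet]
  exact Set.iUnion_const B

noncomputable def Fam.refine (F : Fam S) (T : F.ι → Set X) (hT : ∀ i, T i ⊆ F.P i)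
    (h : ∀ i, ∃ (ι' : Type) (_ : Countable ι') (P' : ι' → Set X),
      (∀ k, P' k ∈ S) ∧ Pairwise (Function.onFun Disjoint P') ∧ (⋃ k, P' k) = T i) :
    Fam S where
  ι := Σ i : F.ι, (h i).choose
  cnt := by
    haveI := fun i => (h i).choose_spec.choose
    haveI := F.cnt
    infer_instance
  P := fun x => (h x.1).choose_spec.choose_spec.choose x.2
  mem := fun x => (h x.1).choose_spec.choose_spec.choose_spec.1 x.2
  disj := by
    rintro ⟨i, k⟩ ⟨j, l⟩ hne
    have hsub : ∀ (i : F.ι) (k), (h i).choose_spec.choose_spec.choose k ⊆ T i := by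
      intro i k
      conv_rhs => rw [← (h i).choose_spec.choose_spec.choose_spec.2.2]
      exact Set.subset_iUnion _ k
    by_cases hij : i = j
    · subst hij
      have hkl : k ≠ l := by
        intro hkl; exact hne (by rw [hkl])
      exact (h i).choose_spec.choose_spec.choose_spec.2.1 hkl
    · exact Disjoint.mono ((hsub i k).trans (hT i)) ((hsub j l).trans (hT j)) (F.disj hij)

lemma Fam.refine_unionSet (F : Fam S) (T : F.ι → Set X) (hT : ∀ i, T i ⊆ F.P i)
    (h : ∀ i, ∃ (ι' : Type) (_ : Countable ι') (P' : ι' → Set X),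
      (∀ k, P' k ∈ S) ∧ Pairwise (Function.onFun Disjoint P') ∧ (⋃ k, P' k) = T i) :
    (F.refine T hT h).unionSet = ⋃ i, T i := by
  unfold Fam.unionSet Fam.refine
  rw [Set.iUnion_sigma]
  exact iUnion_congr fun i => (h i).choose_spec.choose_spec.choose_spec.2.2

noncomputable def Fam.inter (hS : IsIntervalSystem S) (F : Fam S) (Q : Set X) (hQ : Q ∈ S) :
    Fam S :=
  F.refine (fun i => F.P i ∩ Q) (fun i => Set.inter_subset_left)
    (fun i => exists_decomp_of_countable ((hS _ (F.mem i) _ hQ).2))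

lemma Fam.inter_unionSet (hS : IsIntervalSystem S) (F : Fam S) (Q : Set X) (hQ : Q ∈ S) :
    (F.inter hS Q hQ).unionSet = F.unionSet ∩ Q := by
  rw [Fam.inter, Fam.refine_unionSet, Fam.unionSet, Set.iUnion_inter]

noncomputable def Fam.diff (hS : IsIntervalSystem S) (F : Fam S) (Q : Set X) (hQ : Q ∈ S) :
    Fam S :=
  F.refine (fun i => F.P i \ Q) (fun i => Set.diff_subset)
    (fun i => exists_decomp_of_countable ((hS _ (F.mem i) _ hQ).1))

lemma Fam.diff_unionSet (hS : IsIntervalSystem S) (F : Fam S) (Q : Set X) (hQ : Q ∈ S) :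
    (F.diff hS Q hQ).unionSet = F.unionSet \ Q := by
  rw [Fam.diff, Fam.refine_unionSet, Fam.unionSet, Set.iUnion_diff]


section Atoms
variable (hS : IsIntervalSystem S) {n : ℕ} (E : Fin n → Set X) (hE : ∀ j, E j ∈ S)
  (b : Fin n → Bool)

noncomputable def Fam.process (F : Fam S) : List (Fin n) → Fam S
  | [] => F
  | j :: l =>
      Fam.process (if b j then F.inter hS (E j) (hE j) else F.diff hS (E j) (hE j)) l

lemma Fam.process_unionSet (l : List (Fin n)) : ∀ F : Fam S,
    (Fam.process hS E hE b F l).unionSet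
      = F.unionSet ∩ {x | ∀ j ∈ l, (x ∈ E j ↔ b j = true)} := by
  induction l with
  | nil => intro F; simp [Fam.process]
  | cons j l ih =>
      intro F
      rw [Fam.process, ih]
      by_cases hb : b j
      · rw [if_pos hb, Fam.inter_unionSet]
        ext x
        simp only [Set.mem_inter_iff, Set.mem_setOf_eq, List.mem_cons]
        constructor
        · rintro ⟨⟨h1, h2⟩, h3⟩
          exact ⟨h1, fun j' hj' => by
            rcases hj' with rfl | hj'
            · simp [h2, hb]
            · exact h3 j' hj'⟩
        · rintro ⟨h1, h2⟩
          refine ⟨⟨h1, ?_⟩, fun j' hj' => h2 j' (Or.inr hj')⟩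
          have := h2 j (Or.inl rfl)
          rw [this, hb]
      · rw [if_neg hb, Fam.diff_unionSet]
        ext x
        simp only [Set.mem_diff, Set.mem_inter_iff, Set.mem_setOf_eq, List.mem_cons]
        constructor
        · rintro ⟨⟨h1, h2⟩, h3⟩
          refine ⟨h1, fun j' hj' => ?_⟩
          rcases hj' with rfl | hj'
          · constructor
            · intro hx; exact absurd hx h2
            · intro hbj; exact absurd hbj hb
          · exact h3 j' hj'
        · rintro ⟨h1, h2⟩
          refine ⟨⟨h1, fun hx => ?_⟩, fun j' hj' => h2 j' (Or.inr hj')⟩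
          have := (h2 j (Or.inl rfl)).1 hx
          rw [this] at hb; exact hb rfl

end Atoms

lemma exists_atoms (hS : IsIntervalSystem S) {n : ℕ} (E : Fin n → Set X)
    (hE : ∀ j, E j ∈ S) :
    ∃ (ϱ : Type) (_ : Countable ϱ) (R : ϱ → Set X) (bσ : ϱ → Fin n → Bool),
      (∀ ρ, R ρ ∈ S) ∧ Pairwise (Function.onFun Disjoint R) ∧
      (∀ ρ, ∀ x ∈ R ρ, ∀ j, (x ∈ E j ↔ bσ ρ j = true)) ∧
      (∀ j, (⋃ ρ' : {ρ // bσ ρ j = true}, R ρ'.1) = E j) := by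
  classical
  -- atom family for each boolean pattern
  let atomF : (Fin n → Bool) → Fam S := fun b =>
    if hb : ∃ j₀, b j₀ = true then
      Fam.process hS E hE b (Fam.single (E hb.choose) (hE hb.choose)) (List.finRange n)
    else
      ⟨PEmpty, inferInstance, fun i => i.elim, fun i => i.elim, fun i => i.elim⟩
  have hatomU : ∀ b : Fin n → Bool, (∃ j₀, b j₀ = true) →
      (atomF b).unionSet = {x | ∀ j, (x ∈ E j ↔ b j = true)} := by
    intro b hb
    simp only [atomF, dif_pos hb]
    rw [Fam.process_unionSet, Fam.single_unionSet]
    ext x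
    simp only [Set.mem_inter_iff, Set.mem_setOf_eq, List.mem_finRange, true_implies]
    constructor
    · rintro ⟨_, h2⟩; exact h2
    · intro h; exact ⟨(h hb.choose).2 hb.choose_spec, h⟩
  have hatomU' : ∀ b : Fin n → Bool, ¬(∃ j₀, b j₀ = true) → IsEmpty (atomF b).ι := by
    intro b hb
    have he : atomF b
        = ⟨PEmpty, inferInstance, fun i => i.elim, fun i => i.elim, fun i => i.elim⟩ :=
      dif_neg hb
    rw [he]
    exact inferInstance
  have hpt : ∀ (b : Fin n → Bool) (i : (atomF b).ι), ∀ x ∈ (atomF b).P i,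
      ∀ j, (x ∈ E j ↔ b j = true) := by
    intro b i x hx j
    by_cases hb : ∃ j₀, b j₀ = true
    · have : x ∈ (atomF b).unionSet := (atomF b).piece_subset i hx
      rw [hatomU b hb] at this
      exact this j
    · exact ((hatomU' b hb).elim i)
  refine ⟨Σ b : Fin n → Bool, (atomF b).ι, inferInstance,
    fun x => (atomF x.1).P x.2, fun x => x.1, fun x => (atomF x.1).mem x.2, ?_, ?_, ?_⟩
  · rintro ⟨b, i⟩ ⟨b', i'⟩ hne
    by_cases hbb : b = b'
    · subst hbb
      have : i ≠ i' := fun h => hne (by rw [h])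
      exact (atomF b).disj this
    · simp only [Function.onFun]
      rw [Set.disjoint_left]
      intro x hx hx'
      apply hbb
      funext j
      have h1 := hpt b i x hx j
      have h2 := hpt b' i' x hx' j
      by_cases hxe : x ∈ E j
      · rw [h1.1 hxe, h2.1 hxe]
      · cases hb : b j
        · cases hb' : b' j
          · rfl
          · exact absurd (h2.2 hb') hxe
        · exact absurd (h1.2 hb) hxe
  · exact fun x => hpt x.1 x.2
  · intro j
    apply Set.Subset.antisymm
    · rintro x hx
      obtain ⟨⟨⟨b, i⟩, hbj⟩, hxP⟩ := Set.mem_iUnion.1 hx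
      exact (hpt b i x hxP j).2 hbj
    · intro x hx
      set bx : Fin n → Bool := fun j' => decide (x ∈ E j') with hbx
      have hbj : bx j = true := by simp [hbx, hx]
      have hxa : x ∈ (atomF bx).unionSet := by
        rw [hatomU bx ⟨j, hbj⟩]
        intro j'; simp [hbx]
      obtain ⟨_, ⟨i, rfl⟩, hxP⟩ := hxa
      exact Set.mem_iUnion.2 ⟨⟨⟨bx, i⟩, hbj⟩, hxP⟩


noncomputable def unprocFam (hS : IsIntervalSystem S) (R : Set X) (hR : R ∈ S)
    (e : ℕ → Set X) (he : ∀ m, e m ∈ S) : ℕ → Fam S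
  | 0 => Fam.single R hR
  | (m+1) => (unprocFam hS R hR e he m).diff hS (e m) (he m)

lemma unprocFam_unionSet (hS : IsIntervalSystem S) (R : Set X) (hR : R ∈ S)
    (e : ℕ → Set X) (he : ∀ m, e m ∈ S) : ∀ m,
    (unprocFam hS R hR e he m).unionSet = R \ ⋃ k ∈ Finset.range m, e k
  | 0 => by simp [unprocFam]
  | (m+1) => by
      rw [unprocFam, Fam.diff_unionSet, unprocFam_unionSet hS R hR e he m]
      rw [Set.diff_diff, Finset.range_add_one]
      congr 1
      rw [Finset.set_biUnion_insert]
      exact (Set.union_comm _ _)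

lemma exists_exhaustion (hS : IsIntervalSystem S) {R : Set X} (hR : R ∈ S)
    (e : ℕ → Set X) (he : ∀ m, e m ∈ S) :
    ∃ (κ : Type) (_ : Countable κ) (P : κ → Set X) (st : κ → ℕ),
      (∀ k, P k ∈ S) ∧ Pairwise (Function.onFun Disjoint P) ∧
      (∀ k, P k ⊆ e (st k)) ∧ (⋃ k, P k) = R ∩ ⋃ m, e m := by
  classical
  let asg : ℕ → Fam S := fun m => (unprocFam hS R hR e he m).inter hS (e m) (he m)
  have hasgU : ∀ m, (asg m).unionSet = (R \ ⋃ k ∈ Finset.range m, e k) ∩ e m := by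
    intro m
    rw [show asg m = (unprocFam hS R hR e he m).inter hS (e m) (he m) from rfl,
      Fam.inter_unionSet, unprocFam_unionSet hS R hR e he m]
  have hsubU : ∀ (m) (i), (asg m).P i ⊆ (R \ ⋃ k ∈ Finset.range m, e k) ∩ e m := by
    intro m i
    rw [← hasgU]
    exact (asg m).piece_subset i
  refine ⟨Σ m : ℕ, (asg m).ι, inferInstance, fun x => (asg x.1).P x.2, fun x => x.1,
    fun x => (asg x.1).mem x.2, ?_, ?_, ?_⟩
  · rintro ⟨m, i⟩ ⟨m', i'⟩ hne
    by_cases hmm : m = m'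
    · subst hmm
      have hii : i ≠ i' := by intro h; apply hne; rw [h]
      exact (asg m).disj hii
    · simp only [Function.onFun]
      have key : ∀ (a b : ℕ) (ia : (asg a).ι) (ib : (asg b).ι), a < b →
          Disjoint ((asg a).P ia) ((asg b).P ib) := by
        intro a b ia ib hab
        refine Set.disjoint_left.2 fun x hx hx' => ?_
        have h1 : x ∈ e a := ((hsubU a ia) hx).2
        have h2 := ((hsubU b ib) hx').1.2
        exact h2 (Set.mem_biUnion (Finset.mem_range.2 hab) h1)
      rcases lt_or_gt_of_ne hmm with h | h
      · exact key m m' i i' h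
      · exact (key m' m i' i h).symm
  · intro k
    exact fun y hy => ((hsubU k.1 k.2) hy).2
  · apply Set.Subset.antisymm
    · rintro x hx
      obtain ⟨⟨m, i⟩, hxP⟩ := Set.mem_iUnion.1 hx
      have := hsubU m i hxP
      exact ⟨this.1.1, Set.mem_iUnion.2 ⟨m, this.2⟩⟩
    · rintro x ⟨hxR, hxe⟩
      have hex : ∃ m, x ∈ e m := Set.mem_iUnion.1 hxe
      set m := Nat.find hex with hm
      have hxm : x ∈ (asg m).unionSet := by
        rw [hasgU]
        refine ⟨⟨hxR, fun hk => ?_⟩, Nat.find_spec hex⟩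
        obtain ⟨k, hkm, hxk⟩ := Set.mem_iUnion₂.1 hk
        exact Nat.find_min hex (Finset.mem_range.1 hkm) hxk
      obtain ⟨i, hxi⟩ := Set.mem_iUnion.1 hxm
      exact Set.mem_iUnion.2 ⟨⟨m, i⟩, hxi⟩

end Infra


section TopHelpers
variable {Z : Type*} [AddCommGroup Z] [TopologicalSpace Z] [IsTopologicalAddGroup Z]

lemma add_subset_nhds {U : Set Z} (hU : U ∈ nhds 0) :
    ∃ V ∈ nhds (0:Z), ∀ a ∈ V, ∀ b ∈ V, a + b ∈ U := by
  have h : Filter.Tendsto (fun p : Z × Z => p.1 + p.2) (nhds ((0:Z),(0:Z))) (nhds 0) := by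
    simpa using (continuous_add.tendsto ((0:Z),(0:Z)))
  rw [nhds_prod_eq] at h
  have h2 := h hU
  rw [Filter.mem_map, Filter.mem_prod_iff] at h2
  obtain ⟨V₁, h1, V₂, h2', hsub⟩ := h2
  exact ⟨V₁ ∩ V₂, Filter.inter_mem h1 h2',
    fun a ha b hb => hsub (Set.mk_mem_prod ha.1 hb.2)⟩

lemma sum_mem_of_small {α : Type*} (s : Finset α) :
    ∀ U ∈ nhds (0:Z), ∃ V ∈ nhds (0:Z),
      ∀ g : α → Z, (∀ i ∈ s, g i ∈ V) → (∑ i ∈ s, g i) ∈ U := by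
  classical
  induction s using Finset.induction_on with
  | empty => exact fun U hU => ⟨U, hU, fun g _ => by simpa using mem_of_mem_nhds hU⟩
  | @insert a s ha ih =>
    intro U hU
    obtain ⟨W, hW, hWadd⟩ := add_subset_nhds hU
    obtain ⟨V, hV, hVs⟩ := ih W hW
    refine ⟨V ∩ W, Filter.inter_mem hV hW, fun g hg => ?_⟩
    rw [Finset.sum_insert ha]
    exact hWadd _ (hg a (Finset.mem_insert_self a s)).2 _
      (hVs g fun i hi => (hg i (Finset.mem_insert_of_mem hi)).1)

lemma hasSum_exists_finset {α : Type*} {g : α → Z} {z : Z} (h : HasSum g z)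
    {U : Set Z} (hU : U ∈ nhds 0) : ∃ s : Finset α, (∑ i ∈ s, g i) - z ∈ U := by
  have hmem : {y : Z | y - z ∈ U} ∈ nhds z := by
    have hc : Continuous fun y : Z => y - z := continuous_id.sub continuous_const
    have ht : Filter.Tendsto (fun y : Z => y - z) (nhds z) (nhds 0) := by
      simpa using hc.tendsto z
    exact ht hU
  exact (h.eventually hmem).exists

end TopHelpers

/-- (Monotonicity.) Let `VC ⊆ V` and `ZC ⊆ Z` be additive cones (containing `0`
and closed under addition), with `ZC` topologically closed, such that `L v (μ E) ∈ ZC` for every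
`v ∈ VC` and `E ∈ S`. If `f : X → V` is Lebesgue–McShane integrable with integral `a` and
`f x ∈ VC` for every `x`, then `a ∈ ZC`. -/
theorem statement12 {X V W Z : Type*}
    [AddCommGroup V] [UniformSpace V] [IsUniformAddGroup V] [CompleteSpace V] [T2Space V]
    [AddCommGroup W] [UniformSpace W] [IsUniformAddGroup W] [CompleteSpace W] [T2Space W]
    [AddCommGroup Z] [UniformSpace Z] [IsUniformAddGroup Z] [CompleteSpace Z] [T2Space Z]
    (S : Set (Set X)) (hS : IsIntervalSystem S)
    (L : V → W → Z)
    (hL1 : ∀ v₁ v₂ w, L (v₁ + v₂) w = L v₁ w + L v₂ w)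
    (hL2 : ∀ v w₁ w₂, L v (w₁ + w₂) = L v w₁ + L v w₂)
    (hLc : ∀ v, Continuous fun w => L v w)
    (μ : Set X → W) (hμ : IsAddMeasure S μ)
    (VC : Set V) (ZC : Set Z)
    (hV0 : (0 : V) ∈ VC) (hVadd : ∀ a ∈ VC, ∀ b ∈ VC, a + b ∈ VC)
    (hZ0 : (0 : Z) ∈ ZC) (hZadd : ∀ a ∈ ZC, ∀ b ∈ ZC, a + b ∈ ZC)
    (hZclosed : IsClosed ZC)
    (hLZ : ∀ v ∈ VC, ∀ E ∈ S, L v (μ E) ∈ ZC)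
    (f : X → V) (a : Z) (hf : HasLMIntegral S L μ f a) (hfV : ∀ x, f x ∈ VC) :
    a ∈ ZC :=  by
  classical
  have hL0 : ∀ w, L 0 w = 0 := by
    intro w
    have h := hL1 0 0 w
    rw [add_zero] at h
    exact (left_eq_add.1 h)
  have hLw0 : ∀ v, L v 0 = 0 := by
    intro v
    have h := hL2 v 0 0
    rw [add_zero] at h
    exact (left_eq_add.1 h)
  have hLsum : ∀ {m : ℕ} (g : Fin m → V) (s : Finset (Fin m)) (w : W),
      L (∑ j ∈ s, g j) w = ∑ j ∈ s, L (g j) w := by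
    intro m g s w
    induction s using Finset.induction_on with
    | empty => simpa using hL0 w
    | @insert a s ha ih => rw [Finset.sum_insert ha, Finset.sum_insert ha, hL1, ih]
  rw [← hZclosed.closure_eq, mem_closure_iff_nhds]
  intro N hN
  have hT : {t : Z | a + t ∈ N} ∈ nhds (0:Z) := by
    have ht : Filter.Tendsto (fun t : Z => a + t) (nhds 0) (nhds a) := by
      simpa using (continuous_add_left a).tendsto (0:Z)
    exact ht hN
  obtain ⟨Vn, hVn, hVnadd⟩ := add_subset_nhds hT
  obtain ⟨A, ⟨⟨n, c, E, hES, hgraph⟩, D, hDS, hDc, hAeq⟩, hgraphf, hsub⟩ := hf Vn hVn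
  have hA_out : ∀ (v : V) (x : X), (v, x) ∈ A → x ∉ ⋃₀ D → v = 0 := by
    intro v x hvx hxD
    rw [hAeq] at hvx
    rcases hvx with h | h
    · simp only [Set.mem_iUnion, Set.mem_prod, Set.mem_setOf_eq] at h
      obtain ⟨d, hd, _, hxd⟩ := h
      exact absurd ⟨d, hd, hxd⟩ hxD
    · simpa using h.1
  have hA_in : ∀ (v : V) (x : X), (v, x) ∈ A → x ∈ ⋃₀ D →
      ∃ d ∈ D, x ∈ d ∧ ∀ y ∈ d, (v, y) ∈ A := by
    intro v x hvx hxD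
    rw [hAeq] at hvx
    rcases hvx with h | h
    · simp only [Set.mem_iUnion, Set.mem_prod, Set.mem_setOf_eq] at h
      obtain ⟨d, hd, hprop, hxd⟩ := h
      exact ⟨d, hd, hxd, hprop⟩
    · exact absurd hxD h.2
  have hμ0 : ∀ B, B ∈ S → B = ∅ → μ B = 0 := by
    intro B hB hBe
    have h := hμ PEmpty (fun i => i.elim) B inferInstance hB (fun i => i.elim)
      (by intro i; exact i.elim) (by rw [hBe]; exact Set.iUnion_of_empty _)
    exact (hasSum_empty.unique h).symm
  obtain ⟨ϱ, hϱc, R, bσ, hRS, hRdisj, hRpt, hRun⟩ := exists_atoms hS E hES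
  haveI := hϱc
  set cσ : ϱ → V := fun ρ => ∑ j, if bσ ρ j = true then c j else 0 with hcσdef
  have hstep_eq : ∀ ρ, ∀ x ∈ R ρ, stepVal c E x = cσ ρ := by
    intro ρ x hx
    unfold stepVal
    rw [hcσdef]
    apply Finset.sum_congr rfl
    intro j _
    rw [Set.indicator_apply]
    by_cases hxj : x ∈ E j
    · rw [if_pos hxj, if_pos ((hRpt ρ x hx j).1 hxj)]
    · rw [if_neg hxj, if_neg (fun hb => hxj ((hRpt ρ x hx j).2 hb))]
  set z₀ : Z := ∑ j, L (c j) (μ (E j)) with hz₀def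
  have hz₀pre : z₀ ∈ { z : Z | ∃ (n' : ℕ) (c' : Fin n' → V) (E' : Fin n' → Set X),
      (∀ j, E' j ∈ S) ∧ (∀ x, (stepVal c' E' x, x) ∈ A) ∧ z = ∑ j, L (c' j) (μ (E' j)) } :=
    ⟨n, c, E, hES, hgraph, hz₀def⟩
  have houter : HasSum (fun ρ => L (cσ ρ) (μ (R ρ))) z₀ := by
    have h1 : ∀ j : Fin n, HasSum (fun ρ' : {ρ : ϱ // bσ ρ j = true} => L (c j) (μ (R ρ'.1)))
        (L (c j) (μ (E j))) := by
      intro j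
      have hps : Pairwise fun (i i' : {ρ : ϱ // bσ ρ j = true}) => Disjoint (R i.1) (R i'.1) := by
        intro i i' hne
        exact hRdisj (Subtype.coe_ne_coe.2 hne)
      have hsum := hμ {ρ : ϱ // bσ ρ j = true} (fun ρ' => R ρ'.1) (E j) inferInstance (hES j)
        (fun ρ' => hRS ρ'.1) hps (hRun j)
      have h := hsum.map (AddMonoidHom.mk' (L (c j)) (hL2 (c j))) (hLc (c j))
      simpa [Function.comp_def] using h
    have h2 : ∀ j : Fin n, HasSum (fun ρ => Set.indicator {ρ : ϱ | bσ ρ j = true}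
        (fun ρ => L (c j) (μ (R ρ))) ρ) (L (c j) (μ (E j))) := by
      intro j
      rw [← hasSum_subtype_iff_indicator]
      exact h1 j
    have h3 := hasSum_sum (s := (Finset.univ : Finset (Fin n))) (fun j _ => h2 j)
    have heq : (fun ρ => L (cσ ρ) (μ (R ρ)))
        = fun ρ => ∑ j : Fin n, Set.indicator {ρ : ϱ | bσ ρ j = true}
            (fun ρ => L (c j) (μ (R ρ))) ρ := by
      funext ρ
      rw [hcσdef]
      rw [hLsum]
      apply Finset.sum_congr rfl
      intro j _
      rw [Set.indicator_apply]
      by_cases hb : bσ ρ j = true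
      · rw [if_pos hb, if_pos (show ρ ∈ {ρ : ϱ | bσ ρ j = true} from hb)]
      · rw [if_neg hb, if_neg (show ρ ∉ {ρ : ϱ | bσ ρ j = true} from hb), hL0]
    rw [heq, hz₀def]
    exact h3
  set D' : Set (Set X) := {d ∈ D | ∃ v, v ∈ VC ∧ ∀ x ∈ d, (v, x) ∈ A} with hD'def
  have hDD' : ⋃₀ D ⊆ ⋃₀ D' := by
    intro x hx
    obtain ⟨d, hd, hxd, hvAll⟩ := hA_in (f x) x (hgraphf x) hx
    exact ⟨d, ⟨hd, f x, hfV x, hvAll⟩, hxd⟩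
  rcases Set.eq_empty_or_nonempty D' with hD'e | hD'ne
  · -- degenerate case : D' is empty
    have hDe : ∀ x : X, x ∉ ⋃₀ D := by
      intro x hx
      have h := hDD' hx
      rw [hD'e] at h
      simpa using h
    have hz₀0 : z₀ = 0 := by
      have hzero : ∀ ρ, L (cσ ρ) (μ (R ρ)) = 0 := by
        intro ρ
        rcases Set.eq_empty_or_nonempty (R ρ) with hRe | ⟨x, hx⟩
        · rw [hμ0 (R ρ) (hRS ρ) hRe, hLw0]
        · have h0 : cσ ρ = 0 := by
            rw [← hstep_eq ρ x hx]
            exact hA_out _ x (hgraph x) (hDe x)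
          rw [h0, hL0]
      rw [funext hzero] at houter
      exact (houter.unique hasSum_zero)
    obtain ⟨t, ht, hzt⟩ := hsub (subset_closure hz₀pre)
    refine ⟨z₀, ?_, ?_⟩
    · rw [hzt]
      have h := hVnadd t ht 0 (mem_of_mem_nhds hVn)
      rw [add_zero] at h
      exact h
    · rw [hz₀0]; exact hZ0
  · -- main case
    have hD'c : D'.Countable := hDc.mono (fun d hd => hd.1)
    obtain ⟨e, hDe⟩ := hD'c.exists_eq_range hD'ne
    have heD' : ∀ m, e m ∈ D' := by
      intro m; rw [hDe]; exact ⟨m, rfl⟩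
    have heS : ∀ m, e m ∈ S := fun m => hDS (heD' m).1
    choose v hvVC hvA using fun m => (heD' m).2
    choose κ hκc P st hPS hPdisj hPsub hPun using fun ρ => exists_exhaustion hS (hRS ρ) e heS
    haveI : ∀ ρ, Countable (κ ρ) := hκc
    have hUe : ⋃ m, e m = ⋃₀ D' := by rw [hDe, Set.sUnion_range]
    have hfib : ∀ ρ, HasSum (fun k : κ ρ => L (cσ ρ) (μ (P ρ k))) (L (cσ ρ) (μ (R ρ))) := by
      intro ρ
      by_cases hgood : R ρ ⊆ ⋃ m, e m
      · have hun : (⋃ k, P ρ k) = R ρ := by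
          rw [hPun ρ]; exact Set.inter_eq_self_of_subset_left hgood
        have h := hμ (κ ρ) (P ρ) (R ρ) inferInstance (hRS ρ) (hPS ρ) (hPdisj ρ) hun
        have h2 := h.map (AddMonoidHom.mk' (L (cσ ρ)) (hL2 (cσ ρ))) (hLc (cσ ρ))
        simpa [Function.comp_def] using h2
      · obtain ⟨x, hxR, hxe⟩ := Set.not_subset.1 hgood
        have hxD : x ∉ ⋃₀ D := fun hxD => hxe (by rw [hUe]; exact hDD' hxD)
        have h0 : cσ ρ = 0 := by rw [← hstep_eq ρ x hxR]; exact hA_out _ x (hgraph x) hxD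
        rw [h0]
        simp only [hL0]
        exact hasSum_zero
    obtain ⟨Wb, hWb, hWbadd⟩ := add_subset_nhds hVn
    obtain ⟨Φ, hΦ⟩ := hasSum_exists_finset houter hWb
    obtain ⟨Wb', hWb', hWb's⟩ := sum_mem_of_small Φ Wb hWb
    choose Kf hKf using fun ρ => hasSum_exists_finset (hfib ρ) hWb'
    set K : Finset (Σ ρ : ϱ, κ ρ) := Φ.sigma (fun ρ => Kf ρ) with hKdef
    set Pc : (Σ ρ : ϱ, κ ρ) → Set X := fun lam => P lam.1 lam.2 with hPcdef
    set vv : (Σ ρ : ϱ, κ ρ) → V := fun lam => v (st lam.1 lam.2) with hvvdef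
    have hPcS : ∀ lam, Pc lam ∈ S := fun lam => hPS lam.1 lam.2
    have hvvVC : ∀ lam, vv lam ∈ VC := fun lam => hvVC _
    have hvvA : ∀ lam, ∀ x ∈ Pc lam, (vv lam, x) ∈ A :=
      fun lam x hx => hvA _ x (hPsub lam.1 lam.2 hx)
    have hPcsubR : ∀ lam, Pc lam ⊆ R lam.1 := by
      intro lam
      refine (Set.subset_iUnion (P lam.1) lam.2).trans ?_
      rw [hPun lam.1]
      exact Set.inter_subset_left
    have hPcdisj : ∀ lam lam' : (Σ ρ : ϱ, κ ρ), lam ≠ lam' → Disjoint (Pc lam) (Pc lam') := by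
      rintro ⟨ρ, k⟩ ⟨ρ', k'⟩ hne
      by_cases hρ : ρ = ρ'
      · subst hρ
        have hkk : k ≠ k' := by intro h; apply hne; rw [h]
        exact hPdisj ρ hkk
      · exact Disjoint.mono (hPcsubR _) (hPcsubR _) (hRdisj hρ)
    set N' : ℕ := K.card with hN'def
    set eqv : {x // x ∈ K} ≃ Fin N' := K.equivFin with heqvdef
    set c' : Fin (n + N') → V :=
      Fin.append c (fun i => vv (eqv.symm i).1 - cσ (eqv.symm i).1.1) with hc'def
    set E' : Fin (n + N') → Set X := Fin.append E (fun i => Pc (eqv.symm i).1) with hE'def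
    have hE'S : ∀ j, E' j ∈ S := by
      intro j
      refine Fin.addCases (fun i => ?_) (fun i => ?_) j
      · rw [hE'def, Fin.append_left]; exact hES i
      · rw [hE'def, Fin.append_right]; exact hPcS _
    have hstep' : ∀ x : X, stepVal c' E' x
        = stepVal c E x + ∑ i : Fin N',
            Set.indicator (Pc (eqv.symm i).1)
              (fun _ => vv (eqv.symm i).1 - cσ (eqv.symm i).1.1) x := by
      intro x
      unfold stepVal
      rw [Fin.sum_univ_add]
      congr 1
      · apply Finset.sum_congr rfl
        intro i _
        rw [hc'def, hE'def, Fin.append_left, Fin.append_left]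
      · apply Finset.sum_congr rfl
        intro i _
        rw [hc'def, hE'def, Fin.append_right, Fin.append_right]
    have hgraph' : ∀ x, (stepVal c' E' x, x) ∈ A := by
      intro x
      by_cases hx : ∃ lam ∈ K, x ∈ Pc lam
      · obtain ⟨lam, hlamK, hxlam⟩ := hx
        have hval : stepVal c' E' x = vv lam := by
          rw [hstep' x]
          have hsum1 : ∑ i : Fin N', Set.indicator (Pc (eqv.symm i).1)
              (fun _ => vv (eqv.symm i).1 - cσ (eqv.symm i).1.1) x
              = vv lam - cσ lam.1 := by
            rw [Finset.sum_eq_single (eqv ⟨lam, hlamK⟩)]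
            · rw [Equiv.symm_apply_apply]
              exact Set.indicator_of_mem hxlam _
            · intro i _ hne
              apply Set.indicator_of_notMem
              intro hxi
              have hne' : (eqv.symm i).1 ≠ lam := by
                intro hh
                apply hne
                have h3 : eqv.symm i = ⟨lam, hlamK⟩ := Subtype.ext hh
                rw [← h3, Equiv.apply_symm_apply]
              exact (Set.disjoint_left.1 (hPcdisj _ _ hne')) hxi hxlam
            · intro h; exact absurd (Finset.mem_univ _) h
          rw [hsum1, hstep_eq lam.1 x (hPcsubR lam hxlam)]
          abel
        rw [hval]
        exact hvvA lam x hxlam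
      · push_neg at hx
        have hval : stepVal c' E' x = stepVal c E x := by
          rw [hstep' x]
          rw [Finset.sum_eq_zero, add_zero]
          intro i _
          apply Set.indicator_of_notMem
          exact hx (eqv.symm i).1 (eqv.symm i).2
        rw [hval]
        exact hgraph x
    set zv : Z := ∑ lam ∈ K, L (vv lam) (μ (Pc lam)) with hzvdef
    set zc : Z := ∑ lam ∈ K, L (cσ lam.1) (μ (Pc lam)) with hzcdef
    have hLsub : ∀ (v₁ c₁ : V) (w : W), L (v₁ - c₁) w = L v₁ w - L c₁ w := by
      intro v₁ c₁ w
      have h := hL1 (v₁ - c₁) c₁ w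
      rw [sub_add_cancel] at h
      rw [eq_sub_iff_add_eq, ← h]
    have hsum' : ∑ j, L (c' j) (μ (E' j)) = z₀ + (zv - zc) := by
      rw [Fin.sum_univ_add]
      have hfst : ∑ i : Fin n, L (c' (Fin.castAdd N' i)) (μ (E' (Fin.castAdd N' i))) = z₀ := by
        rw [hz₀def]
        apply Finset.sum_congr rfl
        intro i _
        rw [hc'def, hE'def, Fin.append_left, Fin.append_left]
      have hsnd : ∑ i : Fin N', L (c' (Fin.natAdd n i)) (μ (E' (Fin.natAdd n i)))
          = zv - zc := by
        have hterm : ∀ i : Fin N', L (c' (Fin.natAdd n i)) (μ (E' (Fin.natAdd n i)))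
            = L (vv (eqv.symm i).1) (μ (Pc (eqv.symm i).1))
              - L (cσ (eqv.symm i).1.1) (μ (Pc (eqv.symm i).1)) := by
          intro i
          rw [hc'def, hE'def, Fin.append_right, Fin.append_right, hLsub]
        rw [Finset.sum_congr rfl (fun i _ => hterm i)]
        have hre : ∀ g : (Σ ρ : ϱ, κ ρ) → Z,
            ∑ i : Fin N', g (eqv.symm i).1 = ∑ lam ∈ K, g lam := by
          intro g
          rw [← Finset.sum_coe_sort K g]
          exact (Fintype.sum_equiv eqv (fun s => g s.1) (fun i => g (eqv.symm i).1)
            (fun s => by simp)).symm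
        rw [Finset.sum_sub_distrib, hzvdef, hzcdef,
          hre (fun lam => L (vv lam) (μ (Pc lam))),
          hre (fun lam => L (cσ lam.1) (μ (Pc lam)))]
      rw [hfst, hsnd]
    have hzvZC : zv ∈ ZC := by
      rw [hzvdef]
      exact Finset.sum_induction _ (· ∈ ZC) (fun a' b' ha hb => hZadd a' ha b' hb) hZ0
        (fun lam _ => hLZ _ (hvvVC lam) _ (hPcS lam))
    have hzcV : zc - z₀ ∈ Vn := by
      have h3 : ∑ ρ ∈ Φ, ((∑ k ∈ Kf ρ, L (cσ ρ) (μ (P ρ k))) - L (cσ ρ) (μ (R ρ))) ∈ Wb :=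
        hWb's _ (fun ρ _ => hKf ρ)
      have h4 : zc = ∑ ρ ∈ Φ, ∑ k ∈ Kf ρ, L (cσ ρ) (μ (P ρ k)) := by
        rw [hzcdef, hKdef, Finset.sum_sigma]
      have h5 : zc - z₀
          = (∑ ρ ∈ Φ, ((∑ k ∈ Kf ρ, L (cσ ρ) (μ (P ρ k))) - L (cσ ρ) (μ (R ρ))))
            + ((∑ ρ ∈ Φ, L (cσ ρ) (μ (R ρ))) - z₀) := by
        rw [h4, Finset.sum_sub_distrib]
        abel
      rw [h5]
      exact hWbadd _ h3 _ hΦ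
    have hzKpre : z₀ + (zv - zc) ∈ preIntegral S L μ A :=
      subset_closure ⟨n + N', c', E', hE'S, hgraph', hsum'.symm⟩
    obtain ⟨t, ht, hzt⟩ := hsub hzKpre
    refine ⟨zv, ?_, hzvZC⟩
    have hzv : zv = a + (t + (zc - z₀)) := by
      have h6 : zv = (z₀ + (zv - zc)) + (zc - z₀) := by abel
      rw [h6, hzt]
      rw [add_assoc]
    rw [hzv]
    exact hVnadd t ht _ hzcV
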